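/- Let A_t = ∫_0^t ρ(u) du with ε ≤ ρ ≤ 1/ε a.e. for some ε > 0. Then there exists C > 0 such that for all 0 ≤ s < t ≤ T: C^{-1}(t−s)² ≤ m_{s,t} ≤ C(t−s)² and 1 ≤ m̃_{s,t}/m_{s,t} ≤ C. -/

import Mathlib

open MeasureTheory intervalIntegral

set_option maxHeartbeats 1600000 in
/-- For `A_t = ∫_0^t ρ` with `ε ≤ ρ ≤ 1/ε` a.e., `m_{s,t}` is of order `(t−s)²`
and `m̃_{s,t}/m_{s,t}` is bounded. -/
theorem stmt6 (T ε : ℝ) (hT : 0 < T) (hε : 0 < ε) (ρ : ℝ → ℝ) (hmeas : Measurable ρ)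
    (hρ : ∀ᵐ u ∂volume, u ∈ Set.Icc (0 : ℝ) T → ε ≤ ρ u ∧ ρ u ≤ 1 / ε)
    (A : ℝ → ℝ) (hA : ∀ t, A t = ∫ u in (0 : ℝ)..t, ρ u) :
    ∃ C > 0, ∀ s t : ℝ, 0 ≤ s → s < t → t ≤ T →
      (C⁻¹ * (t - s) ^ 2
          ≤ (t - s)⁻¹ * ∫ r in s..t, (A r - (t - s)⁻¹ * ∫ u in s..t, A u) ^ 2)
      ∧ ((t - s)⁻¹ * ∫ r in s..t, (A r - (t - s)⁻¹ * ∫ u in s..t, A u) ^ 2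
          ≤ C * (t - s) ^ 2)
      ∧ (1 ≤ ((t - s)⁻¹ * ∫ r in s..t, (A r - A s) ^ 2)
            / ((t - s)⁻¹ * ∫ r in s..t, (A r - (t - s)⁻¹ * ∫ u in s..t, A u) ^ 2))
      ∧ (((t - s)⁻¹ * ∫ r in s..t, (A r - A s) ^ 2)
            / ((t - s)⁻¹ * ∫ r in s..t, (A r - (t - s)⁻¹ * ∫ u in s..t, A u) ^ 2)
          ≤ C) := by
  refine ⟨24 / ε ^ 2 + 9 / ε ^ 4, by positivity, ?_⟩
  set C : ℝ := 24 / ε ^ 2 + 9 / ε ^ 4 with hCdef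
  have hC0 : 0 < C := by positivity
  intro s t hs hst htT
  have hδ : (0 : ℝ) < t - s := by linarith
  -- integrability of ρ on [0, T]
  have hρT : IntegrableOn ρ (Set.Icc (0 : ℝ) T) := by
    have hb : ∀ᵐ u ∂(volume.restrict (Set.Icc (0 : ℝ) T)), ‖ρ u‖ ≤ 1 / ε := by
      have h1 : ∀ᵐ u ∂(volume.restrict (Set.Icc (0 : ℝ) T)),
          u ∈ Set.Icc (0 : ℝ) T → ε ≤ ρ u ∧ ρ u ≤ 1 / ε := ae_restrict_of_ae hρ
      have h2 := ae_restrict_mem (μ := volume) (measurableSet_Icc : MeasurableSet (Set.Icc (0 : ℝ) T))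
      filter_upwards [h1, h2] with u hu hmem
      have hb := hu hmem
      rw [Real.norm_eq_abs, abs_le]
      have hεinv : (0 : ℝ) < 1 / ε := by positivity
      exact ⟨by linarith [hb.1], hb.2⟩
    exact Integrable.mono' (integrableOn_const measure_Icc_lt_top.ne)
      hmeas.aestronglyMeasurable.restrict hb
  have hρi : ∀ a b : ℝ, 0 ≤ a → a ≤ b → b ≤ T → IntervalIntegrable ρ volume a b := by
    intro a b ha hab hbT
    refine (hρT.mono_set ?_).intervalIntegrable
    rw [Set.uIcc_of_le hab]
    exact Set.Icc_subset_Icc ha hbT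
  -- difference of A as an interval integral
  have hAdiff : ∀ a b : ℝ, 0 ≤ a → a ≤ b → b ≤ T → A b - A a = ∫ u in a..b, ρ u := by
    intro a b ha hab hbT
    rw [hA, hA]
    exact integral_interval_sub_left (hρi 0 b le_rfl (by linarith) hbT)
      (hρi 0 a le_rfl ha (by linarith))
  -- bounds on increments of A
  have hAbound : ∀ a b : ℝ, 0 ≤ a → a ≤ b → b ≤ T →
      ε * (b - a) ≤ A b - A a ∧ A b - A a ≤ (1 / ε) * (b - a) := by
    intro a b ha hab hbT
    have hae : ∀ᵐ u ∂(volume.restrict (Set.Icc a b)), ε ≤ ρ u ∧ ρ u ≤ 1 / ε := by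
      have h1 : ∀ᵐ u ∂(volume.restrict (Set.Icc a b)),
          u ∈ Set.Icc (0 : ℝ) T → ε ≤ ρ u ∧ ρ u ≤ 1 / ε := ae_restrict_of_ae hρ
      have h2 := ae_restrict_mem (μ := volume) (measurableSet_Icc : MeasurableSet (Set.Icc a b))
      filter_upwards [h1, h2] with u hu hmem
      exact hu ⟨le_trans ha hmem.1, le_trans hmem.2 hbT⟩
    rw [hAdiff a b ha hab hbT]
    constructor
    · have h := integral_mono_ae_restrict hab (_root_.intervalIntegrable_const (c := ε))
        (hρi a b ha hab hbT) (hae.mono fun u h => h.1)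
      simpa [mul_comm] using h
    · have h := integral_mono_ae_restrict hab (hρi a b ha hab hbT)
        (_root_.intervalIntegrable_const (c := 1 / ε)) (hae.mono fun u h => h.2)
      simpa [mul_comm] using h
  have hsub : ∀ r ∈ Set.Icc s t, 0 ≤ r ∧ r ≤ T := fun r hr =>
    ⟨le_trans hs hr.1, le_trans hr.2 htT⟩
  -- continuity of A on [s, t]
  have hAcont : ContinuousOn A (Set.Icc s t) := by
    have key : ∀ x ∈ Set.Icc s t, ∀ y ∈ Set.Icc s t, y ≤ x →
        |A x - A y| ≤ (1 / ε) * |x - y| := by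
      intro x hx y hy hyx
      obtain ⟨hl, hu⟩ := hAbound y x (hsub y hy).1 hyx (hsub x hx).2
      rw [abs_of_nonneg (by nlinarith), abs_of_nonneg (by linarith)]
      exact hu
    rw [show Set.Icc s t = Set.uIcc s t from (Set.uIcc_of_le hst.le).symm] at key ⊢
    refine (LipschitzOnWith.continuousOn (K := Real.toNNReal (1 / ε)) ?_)
    rw [lipschitzOnWith_iff_dist_le_mul]
    intro x hx y hy
    rw [Real.dist_eq, Real.dist_eq, Real.coe_toNNReal _ (by positivity)]
    rcases le_total y x with h | h
    · exact key x hx y hy h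
    · rw [abs_sub_comm (A x), abs_sub_comm x]
      exact key y hy x hx h
  have hcont2 : ∀ c : ℝ, ContinuousOn (fun r => (A r - c) ^ 2) (Set.Icc s t) :=
    fun c => (hAcont.sub continuousOn_const).pow 2
  have hAi : IntervalIntegrable A volume s t := by
    refine ContinuousOn.intervalIntegrable ?_
    rwa [Set.uIcc_of_le hst.le]
  have hsqi : ∀ c : ℝ, IntervalIntegrable (fun r => (A r - c) ^ 2) volume s t := by
    intro c
    refine ContinuousOn.intervalIntegrable ?_
    rw [Set.uIcc_of_le hst.le]
    exact hcont2 c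
  set mb : ℝ := (t - s)⁻¹ * ∫ u in s..t, A u with hmbdef
  -- mean-zero property
  have hmean : (∫ u in s..t, (A u - mb)) = 0 := by
    rw [intervalIntegral.integral_sub hAi intervalIntegrable_const,
      intervalIntegral.integral_const, smul_eq_mul, hmbdef]
    field_simp
    ring
  -- key variance identity
  have key : ∀ c : ℝ, (∫ r in s..t, (A r - c) ^ 2)
      = (∫ r in s..t, (A r - mb) ^ 2) + (t - s) * (mb - c) ^ 2 := by
    intro c
    have e : ∀ r, (A r - c) ^ 2
        = (A r - mb) ^ 2 + (2 * (mb - c)) * (A r - mb) + (mb - c) ^ 2 := by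
      intro r; ring
    have hi1 : IntervalIntegrable (fun r => (A r - mb) ^ 2) volume s t := hsqi mb
    have hi2 : IntervalIntegrable (fun r => (2 * (mb - c)) * (A r - mb)) volume s t :=
      (hAi.sub intervalIntegrable_const).const_mul _
    calc (∫ r in s..t, (A r - c) ^ 2)
        = ∫ r in s..t, ((A r - mb) ^ 2 + (2 * (mb - c)) * (A r - mb) + (mb - c) ^ 2) := by
          simp_rw [e]
      _ = (∫ r in s..t, (A r - mb) ^ 2) + (∫ r in s..t, (2 * (mb - c)) * (A r - mb))
            + ∫ r in s..t, (mb - c) ^ 2 := by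
          rw [intervalIntegral.integral_add (hi1.add hi2) intervalIntegrable_const,
            intervalIntegral.integral_add hi1 hi2]
      _ = (∫ r in s..t, (A r - mb) ^ 2) + (t - s) * (mb - c) ^ 2 := by
          rw [intervalIntegral.integral_const_mul, hmean, intervalIntegral.integral_const,
            smul_eq_mul]
          ring
  set mint : ℝ := ∫ r in s..t, (A r - mb) ^ 2 with hmint
  set m2int : ℝ := ∫ r in s..t, (A r - A s) ^ 2 with hm2int
  -- m ≤ m̃
  have hmm : mint ≤ m2int := by
    have hk := key (A s)
    nlinarith [mul_nonneg hδ.le (sq_nonneg (mb - A s))]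
  -- upper bound for m̃
  have hm2up : m2int ≤ (t - s) ^ 3 / (3 * ε ^ 2) := by
    have hmono : ∀ r ∈ Set.Icc s t, (A r - A s) ^ 2 ≤ (1 / ε) ^ 2 * (r - s) ^ 2 := by
      intro r hr
      obtain ⟨hl, hu⟩ := hAbound s r hs hr.1 (hsub r hr).2
      have h0 : 0 ≤ A r - A s := by nlinarith [hr.1]
      nlinarith [hr.1]
    have hint : IntervalIntegrable (fun r => (1 / ε) ^ 2 * (r - s) ^ 2) volume s t :=
      (continuous_const.mul ((continuous_id.sub continuous_const).pow 2)).intervalIntegrable s t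
    have h := integral_mono_on hst.le (hsqi (A s)) hint hmono
    have hcomp : (∫ r in s..t, (1 / ε) ^ 2 * (r - s) ^ 2)
        = (1 / ε) ^ 2 * ((t - s) ^ 3 / 3) := by
      rw [intervalIntegral.integral_const_mul]
      have := intervalIntegral.integral_comp_sub_right (a := s) (b := t) (fun x => x ^ 2) s
      rw [this, integral_pow]
      norm_num
    rw [hcomp] at h
    calc m2int ≤ (1 / ε) ^ 2 * ((t - s) ^ 3 / 3) := h
      _ = (t - s) ^ 3 / (3 * ε ^ 2) := by field_simp
  -- lower bound for m
  set mid : ℝ := (s + t) / 2 with hmiddef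
  have hmids : s ≤ mid := by rw [hmiddef]; linarith
  have hmidt : mid ≤ t := by rw [hmiddef]; linarith
  have hmidI : mid ∈ Set.Icc s t := ⟨hmids, hmidt⟩
  have hi_left : IntervalIntegrable (fun r => (A r - mb) ^ 2) volume s mid := by
    refine ContinuousOn.intervalIntegrable ?_
    rw [Set.uIcc_of_le hmids]
    exact (hcont2 mb).mono (Set.Icc_subset_Icc le_rfl hmidt)
  have hi_right : IntervalIntegrable (fun r => (A r - mb) ^ 2) volume mid t := by
    refine ContinuousOn.intervalIntegrable ?_
    rw [Set.uIcc_of_le hmidt]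
    exact (hcont2 mb).mono (Set.Icc_subset_Icc hmids le_rfl)
  have hsplit : (∫ r in s..mid, (A r - mb) ^ 2) + (∫ r in mid..t, (A r - mb) ^ 2) = mint :=
    integral_add_adjacent_intervals hi_left hi_right
  have hmlow : ε ^ 2 * (t - s) ^ 3 / 24 ≤ mint := by
    rcases le_total mb (A mid) with hc | hc
    · -- use right half
      have hpt : ∀ r ∈ Set.Icc mid t, ε ^ 2 * (r - mid) ^ 2 ≤ (A r - mb) ^ 2 := by
        intro r hr
        have hl := (hAbound mid r (hsub mid hmidI).1 hr.1
          (hsub r ⟨le_trans hmids hr.1, hr.2⟩).2).1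
        have h1 : 0 ≤ ε * (r - mid) := mul_nonneg hε.le (by linarith [hr.1])
        have h2 : ε * (r - mid) ≤ A r - mb := by linarith
        nlinarith [mul_le_mul h2 h2 h1 (h1.trans h2)]
      have hint : IntervalIntegrable (fun r => ε ^ 2 * (r - mid) ^ 2) volume mid t :=
        (continuous_const.mul ((continuous_id.sub continuous_const).pow 2)).intervalIntegrable mid t
      have h := integral_mono_on hmidt hint hi_right hpt
      have hcomp : (∫ r in mid..t, ε ^ 2 * (r - mid) ^ 2) = ε ^ 2 * ((t - mid) ^ 3 / 3) := by
        rw [intervalIntegral.integral_const_mul,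
          intervalIntegral.integral_comp_sub_right (fun x => x ^ 2) mid, integral_pow]
        norm_num
      rw [hcomp] at h
      have hnn : 0 ≤ ∫ r in s..mid, (A r - mb) ^ 2 :=
        intervalIntegral.integral_nonneg hmids fun u _ => sq_nonneg _
      have : t - mid = (t - s) / 2 := by rw [hmiddef]; ring
      rw [this] at h
      nlinarith [h, hnn, hsplit]
    · -- use left half
      have hpt : ∀ r ∈ Set.Icc s mid, ε ^ 2 * (mid - r) ^ 2 ≤ (A r - mb) ^ 2 := by
        intro r hr
        have hl := (hAbound r mid (hsub r ⟨hr.1, le_trans hr.2 hmidt⟩).1 hr.2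
          (hsub mid hmidI).2).1
        have h1 : 0 ≤ ε * (mid - r) := mul_nonneg hε.le (by linarith [hr.2])
        have h2 : ε * (mid - r) ≤ mb - A r := by linarith
        nlinarith [mul_le_mul h2 h2 h1 (h1.trans h2)]
      have hint : IntervalIntegrable (fun r => ε ^ 2 * (mid - r) ^ 2) volume s mid :=
        (continuous_const.mul ((continuous_const.sub continuous_id).pow 2)).intervalIntegrable s mid
      have h := integral_mono_on hmids hint hi_left hpt
      have hcomp : (∫ r in s..mid, ε ^ 2 * (mid - r) ^ 2) = ε ^ 2 * ((mid - s) ^ 3 / 3) := by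
        have e : ∀ r : ℝ, ε ^ 2 * (mid - r) ^ 2 = ε ^ 2 * (r - mid) ^ 2 := by intro r; ring
        simp_rw [e]
        rw [intervalIntegral.integral_const_mul,
          intervalIntegral.integral_comp_sub_right (fun x => x ^ 2) mid, integral_pow]
        push_cast
        ring
      rw [hcomp] at h
      have hnn : 0 ≤ ∫ r in mid..t, (A r - mb) ^ 2 :=
        intervalIntegral.integral_nonneg hmidt fun u _ => sq_nonneg _
      have : mid - s = (t - s) / 2 := by rw [hmiddef]; ring
      rw [this] at h
      nlinarith [h, hnn, hsplit]
  -- assemble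
  have hinv_nn : (0 : ℝ) ≤ (t - s)⁻¹ := inv_nonneg.2 hδ.le
  have ha_low : ε ^ 2 * (t - s) ^ 2 / 24 ≤ (t - s)⁻¹ * mint := by
    have h := mul_le_mul_of_nonneg_left hmlow hinv_nn
    calc ε ^ 2 * (t - s) ^ 2 / 24 = (t - s)⁻¹ * (ε ^ 2 * (t - s) ^ 3 / 24) := by
          field_simp
      _ ≤ (t - s)⁻¹ * mint := h
  have hb_high : (t - s)⁻¹ * m2int ≤ (t - s) ^ 2 / (3 * ε ^ 2) := by
    have h := mul_le_mul_of_nonneg_left hm2up hinv_nn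
    calc (t - s)⁻¹ * m2int ≤ (t - s)⁻¹ * ((t - s) ^ 3 / (3 * ε ^ 2)) := h
      _ = (t - s) ^ 2 / (3 * ε ^ 2) := by field_simp
  have ha_high : (t - s)⁻¹ * mint ≤ (t - s) ^ 2 / (3 * ε ^ 2) :=
    le_trans (mul_le_mul_of_nonneg_left hmm hinv_nn) hb_high
  have hab : (t - s)⁻¹ * mint ≤ (t - s)⁻¹ * m2int := mul_le_mul_of_nonneg_left hmm hinv_nn
  have ha_pos : 0 < (t - s)⁻¹ * mint :=
    lt_of_lt_of_le (by positivity) ha_low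
  refine ⟨?_, ?_, ?_, ?_⟩
  · -- C⁻¹ (t-s)² ≤ m
    have hC1 : (24 : ℝ) / ε ^ 2 ≤ C := by
      rw [hCdef]
      have : (0 : ℝ) < 9 / ε ^ 4 := by positivity
      linarith
    have h2 : C⁻¹ ≤ (24 / ε ^ 2)⁻¹ := inv_anti₀ (by positivity) hC1
    rw [inv_div] at h2
    calc C⁻¹ * (t - s) ^ 2 ≤ (ε ^ 2 / 24) * (t - s) ^ 2 :=
          mul_le_mul_of_nonneg_right h2 (sq_nonneg _)
      _ = ε ^ 2 * (t - s) ^ 2 / 24 := by ring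
      _ ≤ (t - s)⁻¹ * mint := ha_low
  · -- m ≤ C (t-s)²
    have hC1 : 1 / (3 * ε ^ 2) ≤ C := by
      have he : (0 : ℝ) < ε ^ 2 := by positivity
      have he4 : (0 : ℝ) < 9 / ε ^ 4 := by positivity
      have : (1 : ℝ) / (3 * ε ^ 2) ≤ 24 / ε ^ 2 := by
        rw [div_le_div_iff₀ (by positivity) (by positivity)]
        nlinarith
      rw [hCdef]; linarith
    calc (t - s)⁻¹ * mint ≤ (t - s) ^ 2 / (3 * ε ^ 2) := ha_high
      _ = (1 / (3 * ε ^ 2)) * (t - s) ^ 2 := by ring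
      _ ≤ C * (t - s) ^ 2 := mul_le_mul_of_nonneg_right hC1 (sq_nonneg _)
  · exact (one_le_div ha_pos).2 hab
  · rw [div_le_iff₀ ha_pos]
    have hC8 : (8 : ℝ) / ε ^ 4 ≤ C := by
      rw [hCdef]
      have : (8 : ℝ) / ε ^ 4 ≤ 9 / ε ^ 4 := by
        rw [div_le_div_iff₀ (by positivity) (by positivity)]; nlinarith
      have h24 : (0 : ℝ) < 24 / ε ^ 2 := by positivity
      linarith
    calc (t - s)⁻¹ * m2int ≤ (t - s) ^ 2 / (3 * ε ^ 2) := hb_high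
      _ = (8 / ε ^ 4) * (ε ^ 2 * (t - s) ^ 2 / 24) := by field_simp; ring
      _ ≤ C * (ε ^ 2 * (t - s) ^ 2 / 24) :=
          mul_le_mul_of_nonneg_right hC8 (by positivity)
      _ ≤ C * ((t - s)⁻¹ * mint) := mul_le_mul_of_nonneg_left ha_low hC0.le
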